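/- Let T be a tree such that every ultrametric space generated by a non-degenerate vertex labeling of T lies in the class US. Then every path contained in T has length at most 3 (i.e., at most 3 edges). -/
import Mathlib


open SimpleGraph

open scoped Classical in
/-- The distance induced by a vertex labeling `l` on a tree `G`: `0` on the
diagonal, and otherwise the maximum of `l` over the vertices of the unique
path joining the two points. -/
noncomputable def treeDist {V : Type*} {G : SimpleGraph V} (hG : G.IsTree)
    (l : V → NNReal) (u v : V) : NNReal :=
  if u = v then 0
  else (((hG.existsUnique_path u v).choose.support).map l).foldr max 0

/-- A labeling is non-degenerate if `max (l u) (l v) > 0` for every edge `{u, v}`. -/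
def Nondeg {V : Type*} (G : SimpleGraph V) (l : V → NNReal) : Prop :=
  ∀ u v, G.Adj u v → 0 < max (l u) (l v)


private lemma le_foldr_max' {V : Type*} (l : V → NNReal) (s : List V) {z : V} (hz : z ∈ s) :
    l z ≤ (s.map l).foldr max 0 := by
  induction s with
  | nil => simp at hz
  | cons a t ih =>
    simp only [List.map_cons, List.foldr_cons]
    rcases List.mem_cons.1 hz with h | h
    · subst h; exact le_max_left _ _
    · exact (ih h).trans (le_max_right _ _)

private lemma treeDist_eq' {V : Type*} {G : SimpleGraph V} (hG : G.IsTree) (l : V → NNReal)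
    {u v : V} (h : u ≠ v) (p : G.Walk u v) (hp : p.IsPath) :
    treeDist hG l u v = ((p.support).map l).foldr max 0 := by
  unfold treeDist
  rw [if_neg h]
  have hspec := (hG.existsUnique_path u v).choose_spec
  have := hspec.2 p hp
  rw [this]

private lemma start_le_treeDist' {V : Type*} {G : SimpleGraph V} (hG : G.IsTree)
    (l : V → NNReal) {u v : V} (h : u ≠ v) : l u ≤ treeDist hG l u v := by
  unfold treeDist
  rw [if_neg h]
  exact le_foldr_max' l _ (SimpleGraph.Walk.start_mem_support _)

theorem stmt_5 {V : Type*} {G : SimpleGraph V} (hG : G.IsTree)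
    (hUS : ∀ l : V → NNReal, Nondeg G l →
        ∃ x₀ : V, ∀ x y : V, x ≠ y → treeDist hG l x₀ x ≤ treeDist hG l y x) :
    ∀ (u v : V) (p : G.Walk u v), p.IsPath → p.length ≤ 3 := by
  classical
  intro u v p hp
  by_contra hlen
  push_neg at hlen
  -- destructure p into at least 4 edges
  cases p with
  | nil => simp at hlen
  | cons h01 p =>
  cases p with
  | nil => simp at hlen
  | cons h12 p =>
  cases p with
  | nil => simp at hlen
  | cons h23 p =>
  cases p with
  | nil => simp at hlen
  | cons h34 q =>
  rename_i v1 v2 v3 v4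
  set v0 := u with hv0
  -- distinctness
  have hnd := hp.support_nodup
  simp only [Walk.support_cons, List.nodup_cons, List.mem_cons] at hnd
  have hmem4 : v4 ∈ q.support := Walk.start_mem_support q
  obtain ⟨hn0, hn1, hn2, hn3, _⟩ := hnd
  push_neg at hn0 hn1 hn2
  have ne01 : v0 ≠ v1 := hn0.1
  have ne02 : v0 ≠ v2 := hn0.2.1
  have ne03 : v0 ≠ v3 := hn0.2.2.1
  have ne04 : v0 ≠ v4 := fun h => hn0.2.2.2 (h ▸ hmem4)
  have ne12 : v1 ≠ v2 := hn1.1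
  have ne13 : v1 ≠ v3 := hn1.2.1
  have ne14 : v1 ≠ v4 := fun h => hn1.2.2 (h ▸ hmem4)
  have ne23 : v2 ≠ v3 := hn2.1
  have ne24 : v2 ≠ v4 := fun h => hn2.2 (h ▸ hmem4)
  have ne34 : v3 ≠ v4 := fun h => hn3 (h ▸ hmem4)
  -- the labeling
  set l : V → NNReal := fun x => if x = v0 ∨ x = v4 then 0 else if x = v1 ∨ x = v3 then 1 else 2 with hl
  have hl0 : l v0 = 0 := by simp [hl]
  have hl4 : l v4 = 0 := by simp [hl]
  have hl1 : l v1 = 1 := by simp [hl, ne01.symm, ne14]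
  have hl3 : l v3 = 1 := by simp [hl, ne03.symm, ne34]
  have hl2 : l v2 = 2 := by simp [hl, ne02.symm, ne24, ne12.symm, ne23]
  have hlpos : ∀ x, x ≠ v0 → x ≠ v4 → 0 < l x := by
    intro x h1 h2
    simp only [hl]
    rw [if_neg (by tauto)]
    split <;> norm_num
  -- v0 and v4 are not adjacent
  have hnadj : ¬ G.Adj v0 v4 := by
    intro hadj
    have h4 : (Walk.cons h01 (Walk.cons h12 (Walk.cons h23 (Walk.cons h34 Walk.nil)))).IsPath := by
      simp [Walk.isPath_def, ne01, ne02, ne03, ne04, ne12, ne13, ne14, ne23, ne24, ne34, ne01.symm, ne02.symm, ne03.symm, ne04.symm, ne12.symm, ne13.symm, ne14.symm, ne23.symm, ne24.symm, ne34.symm]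
    have h1 : (Walk.cons hadj Walk.nil).IsPath := by
      simp [Walk.isPath_def, ne01, ne02, ne03, ne04, ne12, ne13, ne14, ne23, ne24, ne34, ne01.symm, ne02.symm, ne03.symm, ne04.symm, ne12.symm, ne13.symm, ne14.symm, ne23.symm, ne24.symm, ne34.symm]
    have := (hG.existsUnique_path v0 v4).unique h4 h1
    simpa using congrArg Walk.length this
  have hndg : Nondeg G l := by
    intro a b hab
    rcases eq_or_ne a v0 with ha0 | ha0
    · rcases eq_or_ne b v0 with hb0 | hb0
      · exact absurd (ha0 ▸ hb0 ▸ hab) (G.irrefl)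
      · rcases eq_or_ne b v4 with hb4 | hb4
        · exact absurd (ha0 ▸ hb4 ▸ hab) hnadj
        · exact lt_max_of_lt_right (hlpos b hb0 hb4)
    · rcases eq_or_ne a v4 with ha4 | ha4
      · rcases eq_or_ne b v0 with hb0 | hb0
        · exact absurd (ha4 ▸ hb0 ▸ hab).symm hnadj
        · rcases eq_or_ne b v4 with hb4 | hb4
          · exact absurd (ha4 ▸ hb4 ▸ hab) (G.irrefl)
          · exact lt_max_of_lt_right (hlpos b hb0 hb4)
      · exact lt_max_of_lt_left (hlpos a ha0 ha4)
  obtain ⟨x₀, hx₀⟩ := hUS l hndg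
  -- distance from v0 to v1 is 1
  have hd01 : treeDist hG l v0 v1 = 1 := by
    rw [treeDist_eq' hG l ne01 (Walk.cons h01 Walk.nil) (by simp [Walk.isPath_def, ne01, ne02, ne03, ne04, ne12, ne13, ne14, ne23, ne24, ne34, ne01.symm, ne02.symm, ne03.symm, ne04.symm, ne12.symm, ne13.symm, ne14.symm, ne23.symm, ne24.symm, ne34.symm])]
    simp [hl0, hl1]
  have hd43 : treeDist hG l v4 v3 = 1 := by
    rw [treeDist_eq' hG l ne34.symm (Walk.cons h34.symm Walk.nil)
      (by simp [Walk.isPath_def, ne01, ne02, ne03, ne04, ne12, ne13, ne14, ne23, ne24, ne34, ne01.symm, ne02.symm, ne03.symm, ne04.symm, ne12.symm, ne13.symm, ne14.symm, ne23.symm, ne24.symm, ne34.symm])]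
    simp [hl4, hl3]
  have hA : x₀ = v0 ∨ x₀ = v1 := by
    by_contra hA
    push_neg at hA
    obtain ⟨hA0, hA1⟩ := hA
    have hle : treeDist hG l x₀ v1 ≤ 1 := hd01 ▸ hx₀ v1 v0 ne01.symm
    rcases eq_or_ne x₀ v3 with h3 | h3
    · subst h3
      rw [treeDist_eq' hG l ne13.symm (Walk.cons h23.symm (Walk.cons h12.symm Walk.nil))
        (by simp [Walk.isPath_def, ne01, ne02, ne03, ne04, ne12, ne13, ne14, ne23, ne24, ne34, ne01.symm, ne02.symm, ne03.symm, ne04.symm, ne12.symm, ne13.symm, ne14.symm, ne23.symm, ne24.symm, ne34.symm])] at hle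
      simp [hl1, hl2, hl3] at hle
    rcases eq_or_ne x₀ v4 with h4 | h4
    · subst h4
      rw [treeDist_eq' hG l ne14.symm
        (Walk.cons h34.symm (Walk.cons h23.symm (Walk.cons h12.symm Walk.nil)))
        (by simp [Walk.isPath_def, ne01, ne02, ne03, ne04, ne12, ne13, ne14, ne23, ne24, ne34, ne01.symm, ne02.symm, ne03.symm, ne04.symm, ne12.symm, ne13.symm, ne14.symm, ne23.symm, ne24.symm, ne34.symm])] at hle
      simp [hl1, hl2, hl3, hl4] at hle
    · have hlx : l x₀ = 2 := by
        simp only [hl]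
        rw [if_neg (by tauto), if_neg (by tauto)]
      have := (start_le_treeDist' hG l hA1).trans hle
      rw [hlx] at this
      norm_num at this
  have hB : x₀ = v3 ∨ x₀ = v4 := by
    by_contra hB
    push_neg at hB
    obtain ⟨hB3, hB4⟩ := hB
    have hle : treeDist hG l x₀ v3 ≤ 1 := hd43 ▸ hx₀ v3 v4 ne34
    rcases eq_or_ne x₀ v0 with h0 | h0
    · subst h0
      rw [treeDist_eq' hG l ne03 (Walk.cons h01 (Walk.cons h12 (Walk.cons h23 Walk.nil)))
        (by simp [Walk.isPath_def, ne01, ne02, ne03, ne04, ne12, ne13, ne14, ne23, ne24, ne34, ne01.symm, ne02.symm, ne03.symm, ne04.symm, ne12.symm, ne13.symm, ne14.symm, ne23.symm, ne24.symm, ne34.symm])] at hle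
      simp [hl0, hl1, hl2, hl3] at hle
    rcases eq_or_ne x₀ v1 with h1 | h1
    · subst h1
      rw [treeDist_eq' hG l ne13 (Walk.cons h12 (Walk.cons h23 Walk.nil))
        (by simp [Walk.isPath_def, ne01, ne02, ne03, ne04, ne12, ne13, ne14, ne23, ne24, ne34, ne01.symm, ne02.symm, ne03.symm, ne04.symm, ne12.symm, ne13.symm, ne14.symm, ne23.symm, ne24.symm, ne34.symm])] at hle
      simp [hl1, hl2, hl3] at hle
    · have hlx : l x₀ = 2 := by
        simp only [hl]
        rw [if_neg (by tauto), if_neg (by tauto)]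
      have := (start_le_treeDist' hG l hB3).trans hle
      rw [hlx] at this
      norm_num at this
  rcases hA with rfl | rfl <;> rcases hB with h | h <;> first
    | exact ne03 h | exact ne04 h | exact ne13 h | exact ne14 h
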